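/- Assume additionally that λ < a and λ < h. Then for every x ∈ [0,π] and every integer k ≥ 1, the functions y ↦ L(x,y) and y ↦ L(y) are differentiable on the open interval (y_k, y_{k+1}), and there exists a constant C > 0 (independent of k, x and y) such that |L(y)·∂_y L(x,y) − L(x,y)·∂_y L(y)| ≤ C·(λ/a)^k·L(y)² for every x ∈ [0,π] and every y ∈ (y_k, y_{k+1}). In particular sup_{x∈[0,π]} |L(y)·∂_y L(x,y) − L(x,y)·∂_y L(y)| / L(y)² → 0 as y → y_∞. -/

import Mathlib

set_option maxHeartbeats 1600000


open Real MeasureTheory Set Filter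

noncomputable section

namespace StokesCounterexample

/-- `ySeq a k = Σ_{j=1}^k a^j` (so `ySeq a 0 = 0`). -/
def ySeq (a : ℝ) (k : ℕ) : ℝ := ∑ j ∈ Finset.range k, a ^ (j + 1)

/-- `yInf a = Σ_{j=1}^∞ a^j = a / (1 - a)`. -/
def yInf (a : ℝ) : ℝ := a / (1 - a)

/-- `fSeq h l 0 = 0` and `fSeq h l k x = h^k · sin (x / l^k)` for `k ≥ 1`. -/
def fSeq (h l : ℝ) (k : ℕ) (x : ℝ) : ℝ :=
  if k = 0 then 0 else h ^ k * Real.sin (x / l ^ k)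

open Classical in
/-- The interpolation `ψ(x,y) = (1 - φ_k(y))·f_k(x) + φ_k(y)·f_{k+1}(x)` for
`y ∈ [y_k, y_{k+1})`, where `φ_k(y) = φ((y - y_k)/a^(k+1))`, extended by `0`
outside of `⋃_k [y_k, y_{k+1})` (in particular `ψ(x, y_∞) = 0`). -/
def psi (a h l : ℝ) (φ : ℝ → ℝ) (x y : ℝ) : ℝ :=
  if hk : ∃ k : ℕ, ySeq a k ≤ y ∧ y < ySeq a (k + 1) then
    (1 - φ ((y - ySeq a hk.choose) / a ^ (hk.choose + 1))) * fSeq h l hk.choose x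
      + φ ((y - ySeq a hk.choose) / a ^ (hk.choose + 1)) * fSeq h l (hk.choose + 1) x
  else 0

/-- The partial derivative of `ψ` in the first variable. -/
def psi₁ (a h l : ℝ) (φ : ℝ → ℝ) (x y : ℝ) : ℝ :=
  deriv (fun t => psi a h l φ t y) x

/-- The partial derivative of `ψ` in the second variable. -/
def psi₂ (a h l : ℝ) (φ : ℝ → ℝ) (x y : ℝ) : ℝ :=
  deriv (fun s => psi a h l φ x s) y

/-- The arc length `L(x,y) = ∫_0^x √(1 + (∂₁ψ(t,y))²) dt`. -/
def arc (a h l : ℝ) (φ : ℝ → ℝ) (x y : ℝ) : ℝ :=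
  ∫ t in (0:ℝ)..x, Real.sqrt (1 + psi₁ a h l φ t y ^ 2)

/-- The length `L(y) = L(π, y)` of the section of the graph of `ψ` at height `y`. -/
def len (a h l : ℝ) (φ : ℝ → ℝ) (y : ℝ) : ℝ := arc a h l φ π y

/-! ### Auxiliary lemmas -/

lemma integral_cos_int_mul (j : ℤ) (hj : j ≠ 0) :
    ∫ t in (0:ℝ)..π, Real.cos (j * t) = 0 := by
  have hj' : (j:ℝ) ≠ 0 := Int.cast_ne_zero.mpr hj
  rw [intervalIntegral.integral_comp_mul_left Real.cos hj']
  simp [Real.sin_int_mul_pi]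

lemma integral_cos_mul_cos (m n : ℕ) (hm : 0 < m) (hn : 0 < n) :
    ∫ t in (0:ℝ)..π, Real.cos (m * t) * Real.cos (n * t)
      = if m = n then π / 2 else 0 := by
  have hid : ∀ t : ℝ, Real.cos (m * t) * Real.cos (n * t)
      = (Real.cos ((((m:ℤ) - n : ℤ)) * t) + Real.cos ((((m:ℤ) + n : ℤ)) * t)) / 2 := by
    intro t
    have h2 := Real.two_mul_cos_mul_cos ((m:ℝ) * t) ((n:ℝ) * t)
    push_cast
    rw [sub_mul, add_mul]
    linarith [h2]
  simp only [hid]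
  rw [intervalIntegral.integral_div]
  have c1 : Continuous fun t : ℝ => Real.cos ((((m:ℤ) - n : ℤ):ℝ) * t) := by fun_prop
  have c2 : Continuous fun t : ℝ => Real.cos ((((m:ℤ) + n : ℤ):ℝ) * t) := by fun_prop
  rw [intervalIntegral.integral_add (c1.intervalIntegrable _ _) (c2.intervalIntegrable _ _)]
  rcases eq_or_ne m n with rfl | hmn
  · rw [integral_cos_int_mul ((m:ℤ)+m) (by positivity)]
    rw [show ((m:ℤ) - m : ℤ) = 0 by ring]
    simp
  · rw [integral_cos_int_mul _ (by omega), integral_cos_int_mul _ (by positivity)]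
    simp [hmn]

lemma sqrt_one_add_sq_lower {A B : ℝ} (hA : 0 ≤ A) (m n : ℕ)
    (hm : 0 < m) (hn : 0 < n) (hmn : m ≠ n) :
    π / 2 * A ≤ ∫ t in (0:ℝ)..π,
      Real.sqrt (1 + (A * Real.cos (m * t) + B * Real.cos (n * t)) ^ 2) := by
  set p : ℝ → ℝ := fun t => A * Real.cos (m * t) + B * Real.cos (n * t) with hp
  have hpc : Continuous p := by fun_prop
  have h1 : ∫ t in (0:ℝ)..π, p t * Real.cos (m * t) = A * (π / 2) := by
    have : ∀ t : ℝ, p t * Real.cos (m * t)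
        = A * (Real.cos (m*t) * Real.cos (m*t)) + B * (Real.cos (n*t) * Real.cos (m*t)) := by
      intro t; simp only [hp]; ring
    simp only [this]
    rw [intervalIntegral.integral_add (by apply Continuous.intervalIntegrable; fun_prop)
      (by apply Continuous.intervalIntegrable; fun_prop),
      intervalIntegral.integral_const_mul, intervalIntegral.integral_const_mul,
      integral_cos_mul_cos m m hm hm, integral_cos_mul_cos n m hn hm]
    simp [hmn, Ne.symm hmn]
  have h2 : A * (π / 2) ≤ ∫ t in (0:ℝ)..π, |p t| := by
    rw [← h1]
    calc ∫ t in (0:ℝ)..π, p t * Real.cos (m * t)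
        ≤ |∫ t in (0:ℝ)..π, p t * Real.cos (m * t)| := le_abs_self _
      _ ≤ ∫ t in (0:ℝ)..π, |p t * Real.cos (m * t)| :=
          intervalIntegral.abs_integral_le_integral_abs (le_of_lt Real.pi_pos)
      _ ≤ ∫ t in (0:ℝ)..π, |p t| := by
          apply intervalIntegral.integral_mono_on (le_of_lt Real.pi_pos)
          · exact (Continuous.abs (by fun_prop)).intervalIntegrable _ _
          · exact hpc.abs.intervalIntegrable _ _
          · intro t _
            rw [abs_mul]
            calc |p t| * |Real.cos (m * t)| ≤ |p t| * 1 :=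
                mul_le_mul_of_nonneg_left (Real.abs_cos_le_one _) (abs_nonneg _)
              _ = |p t| := mul_one _
  have h3 : ∫ t in (0:ℝ)..π, |p t| ≤ ∫ t in (0:ℝ)..π, Real.sqrt (1 + p t ^ 2) := by
    apply intervalIntegral.integral_mono_on (le_of_lt Real.pi_pos)
    · exact hpc.abs.intervalIntegrable _ _
    · exact (Continuous.sqrt (by fun_prop)).intervalIntegrable _ _
    · intro t _
      rw [← Real.sqrt_sq_eq_abs]
      exact Real.sqrt_le_sqrt (by nlinarith)
  calc π / 2 * A = A * (π/2) := by ring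
    _ ≤ _ := h2.trans h3

lemma pi_le_integral_sqrt {p : ℝ → ℝ} (hpc : Continuous p) :
    π ≤ ∫ t in (0:ℝ)..π, Real.sqrt (1 + p t ^ 2) := by
  have : ∫ t in (0:ℝ)..π, (1:ℝ) ≤ ∫ t in (0:ℝ)..π, Real.sqrt (1 + p t ^ 2) := by
    apply intervalIntegral.integral_mono_on (le_of_lt Real.pi_pos)
    · exact intervalIntegrable_const
    · exact (Continuous.sqrt (by fun_prop)).intervalIntegrable _ _
    · intro t _
      nlinarith [Real.sq_sqrt (show (0:ℝ) ≤ 1 + p t ^ 2 by positivity),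
        Real.sqrt_nonneg (1 + p t ^ 2)]
  simpa using this

lemma periodic_decomp {F : ℝ → ℝ} {T M : ℝ} (hT : 0 < T)
    (hFper : Function.Periodic F T) (hFc : Continuous F) (hM : ∀ t, |F t| ≤ M)
    {z : ℝ} (hz : 0 ≤ z) :
    ∃ e : ℝ, |e| ≤ T * M ∧
      ∫ t in (0:ℝ)..z, F t = (⌊z / T⌋₊ : ℝ) * (∫ t in (0:ℝ)..T, F t) + e := by
  set n : ℕ := ⌊z / T⌋₊ with hn
  have hint : ∀ t₁ t₂ : ℝ, IntervalIntegrable F MeasureSpace.volume t₁ t₂ :=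
    fun t₁ t₂ => hFc.intervalIntegrable _ _
  have hnz : (n : ℝ) * T ≤ z := by
    rw [← le_div_iff₀ hT]
    exact Nat.floor_le (by positivity)
  have hzn : z < (n : ℝ) * T + T := by
    have := Nat.lt_floor_add_one (z / T)
    have := (div_lt_iff₀ hT).mp this
    push_cast at this ⊢
    linarith
  refine ⟨∫ t in ((n:ℝ) * T)..z, F t, ?_, ?_⟩
  · have hb : ∀ t ∈ Set.uIoc ((n:ℝ)*T) z, ‖F t‖ ≤ M := fun t _ => hM t
    have := intervalIntegral.norm_integral_le_of_norm_le_const hb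
    rw [Real.norm_eq_abs] at this
    refine this.trans ?_
    have hM0 : 0 ≤ M := (abs_nonneg _).trans (hM 0)
    have : |z - (n:ℝ)*T| ≤ T := by
      rw [abs_of_nonneg (by linarith)]; linarith
    calc M * |z - (n:ℝ)*T| ≤ M * T := by nlinarith
      _ = T * M := by ring
  · have h1 : ∫ t in (0:ℝ)..((n:ℝ)*T), F t = (n:ℝ) * ∫ t in (0:ℝ)..T, F t := by
      have := hFper.intervalIntegral_add_zsmul_eq (n : ℤ) 0 hint
      simpa [zsmul_eq_mul] using this
    rw [← intervalIntegral.integral_add_adjacent_intervals (hint 0 ((n:ℝ)*T)) (hint _ z), h1]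

lemma det_bound {F G : ℝ → ℝ} {T MF MG : ℝ} (hT : 0 < T) (hT2 : T ≤ 2 * π)
    (hFper : Function.Periodic F T) (hGper : Function.Periodic G T)
    (hFc : Continuous F) (hGc : Continuous G)
    (hMF : ∀ t, |F t| ≤ MF) (hMG : ∀ t, |G t| ≤ MG)
    {x : ℝ} (hx0 : 0 ≤ x) (hxπ : x ≤ π) :
    |(∫ t in (0:ℝ)..π, F t) * (∫ t in (0:ℝ)..x, G t)
      - (∫ t in (0:ℝ)..x, F t) * (∫ t in (0:ℝ)..π, G t)| ≤ 8 * π * T * MF * MG := by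
  have hMF0 : 0 ≤ MF := (abs_nonneg _).trans (hMF 0)
  have hMG0 : 0 ≤ MG := (abs_nonneg _).trans (hMG 0)
  obtain ⟨e1, he1, hd1⟩ := periodic_decomp hT hFper hFc hMF (le_of_lt Real.pi_pos)
  obtain ⟨e2, he2, hd2⟩ := periodic_decomp hT hGper hGc hMG hx0
  obtain ⟨e3, he3, hd3⟩ := periodic_decomp hT hFper hFc hMF hx0
  obtain ⟨e4, he4, hd4⟩ := periodic_decomp hT hGper hGc hMG (le_of_lt Real.pi_pos)
  set AF := ∫ t in (0:ℝ)..T, F t with hAF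
  set AG := ∫ t in (0:ℝ)..T, G t with hAG
  have hbnd : ∀ (H : ℝ → ℝ) (M : ℝ), (∀ t, |H t| ≤ M) →
      |∫ t in (0:ℝ)..T, H t| ≤ T * M := by
    intro H M hM'
    have := intervalIntegral.norm_integral_le_of_norm_le_const
      (f := H) (C := M) (a := 0) (b := T)
      (fun t _ => by rw [Real.norm_eq_abs]; exact hM' t)
    rw [Real.norm_eq_abs] at this
    refine this.trans ?_
    rw [abs_of_nonneg (by linarith : (0:ℝ) ≤ T - 0)]
    have hM0 : 0 ≤ M := (abs_nonneg _).trans (hM' 0)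
    nlinarith
  have hAFb : |AF| ≤ T * MF := hbnd F MF hMF
  have hAGb : |AG| ≤ T * MG := hbnd G MG hMG
  set m : ℕ := ⌊π / T⌋₊
  set nn : ℕ := ⌊x / T⌋₊
  have hm : (m:ℝ) * T ≤ π := by
    rw [← le_div_iff₀ hT]; exact Nat.floor_le (by positivity)
  have hnn : (nn:ℝ) * T ≤ π := by
    rw [← le_div_iff₀ hT]
    exact (Nat.floor_le (by positivity)).trans (by gcongr)
  have hm0 : (0:ℝ) ≤ (m:ℝ) := Nat.cast_nonneg _
  have hnn0 : (0:ℝ) ≤ (nn:ℝ) := Nat.cast_nonneg _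
  rw [hd1, hd2, hd3, hd4]
  have hkey : ((m:ℝ) * AF + e1) * ((nn:ℝ) * AG + e2) - ((nn:ℝ) * AF + e3) * ((m:ℝ) * AG + e4)
      = AF * ((m:ℝ) * e2 - (nn:ℝ) * e4) + AG * ((nn:ℝ) * e1 - (m:ℝ) * e3)
        + (e1 * e2 - e3 * e4) := by ring
  rw [hkey]
  have b1 : |AF * ((m:ℝ) * e2 - (nn:ℝ) * e4)| ≤ (T * MF) * (2 * π * MG) := by
    rw [abs_mul]
    have h1 : |(m:ℝ) * e2 - (nn:ℝ) * e4| ≤ 2 * π * MG := by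
      refine (abs_sub _ _).trans ?_
      rw [abs_mul, abs_mul, Nat.abs_cast, Nat.abs_cast]
      nlinarith [abs_nonneg e2, abs_nonneg e4, he2, he4]
    exact mul_le_mul hAFb h1 (abs_nonneg _) (by positivity)
  have b2 : |AG * ((nn:ℝ) * e1 - (m:ℝ) * e3)| ≤ (T * MG) * (2 * π * MF) := by
    rw [abs_mul]
    have h1 : |(nn:ℝ) * e1 - (m:ℝ) * e3| ≤ 2 * π * MF := by
      refine (abs_sub _ _).trans ?_
      rw [abs_mul, abs_mul, Nat.abs_cast, Nat.abs_cast]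
      nlinarith [abs_nonneg e1, abs_nonneg e3, he1, he3]
    exact mul_le_mul hAGb h1 (abs_nonneg _) (by positivity)
  have b3 : |e1 * e2 - e3 * e4| ≤ 2 * ((T * MF) * (T * MG)) := by
    refine (abs_sub _ _).trans ?_
    rw [abs_mul, abs_mul]
    have := mul_le_mul he1 he2 (abs_nonneg _) (by positivity)
    have := mul_le_mul he3 he4 (abs_nonneg _) (by positivity)
    linarith
  calc |AF * ((m:ℝ) * e2 - (nn:ℝ) * e4) + AG * ((nn:ℝ) * e1 - (m:ℝ) * e3) + (e1 * e2 - e3 * e4)|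
      ≤ |AF * ((m:ℝ) * e2 - (nn:ℝ) * e4) + AG * ((nn:ℝ) * e1 - (m:ℝ) * e3)| + |e1 * e2 - e3 * e4| :=
        abs_add_le _ _
    _ ≤ |AF * ((m:ℝ) * e2 - (nn:ℝ) * e4)| + |AG * ((nn:ℝ) * e1 - (m:ℝ) * e3)| + |e1 * e2 - e3 * e4| := by
        have := abs_add_le (AF * ((m:ℝ) * e2 - (nn:ℝ) * e4)) (AG * ((nn:ℝ) * e1 - (m:ℝ) * e3))
        linarith
    _ ≤ (T * MF) * (2 * π * MG) + (T * MG) * (2 * π * MF) + 2 * ((T * MF) * (T * MG)) := by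
        linarith
    _ ≤ 8 * π * T * MF * MG := by
        nlinarith [Real.pi_pos, hMF0, hMG0, hT.le, mul_nonneg hMF0 hMG0,
          mul_nonneg hT.le (mul_nonneg hMF0 hMG0)]

lemma ySeq_succ (a : ℝ) (k : ℕ) : ySeq a (k + 1) = ySeq a k + a ^ (k + 1) :=
  Finset.sum_range_succ _ _

lemma ySeq_strictMono {a : ℝ} (ha : 0 < a) : StrictMono (ySeq a) := by
  apply strictMono_nat_of_lt_succ
  intro n
  rw [ySeq_succ]
  nlinarith [pow_pos ha (n + 1)]

lemma ySeq_lt_yInf {a : ℝ} (ha0 : 0 < a) (ha1 : a < 1) (k : ℕ) : ySeq a k < yInf a := by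
  have h1 : ySeq a k = a * ((1 - a ^ k) / (1 - a)) := by
    rw [ySeq]
    have hg := geom_sum_eq (ne_of_lt ha1) k
    have h2 : ∀ j ∈ Finset.range k, a ^ (j + 1) = a * a ^ j := fun j _ => by ring
    rw [Finset.sum_congr rfl h2, ← Finset.mul_sum, hg]
    have hne : a - 1 ≠ 0 := by intro hc; nlinarith
    have hne2 : (1:ℝ) - a ≠ 0 := by intro hc; nlinarith
    field_simp
    ring
  have hk : 0 < a ^ k := pow_pos ha0 k
  have h1a : 0 < 1 - a := by linarith
  rw [h1, yInf, show a / (1 - a) = a * (1 / (1 - a)) by ring]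
  apply mul_lt_mul_of_pos_left ?_ ha0
  rw [div_lt_div_iff₀ h1a h1a]
  nlinarith

lemma psi_eq {a h l : ℝ} (ha0 : 0 < a) (φ : ℝ → ℝ) {k : ℕ} {y : ℝ}
    (hy1 : ySeq a k ≤ y) (hy2 : y < ySeq a (k + 1)) (x : ℝ) :
    psi a h l φ x y = (1 - φ ((y - ySeq a k) / a ^ (k + 1))) * fSeq h l k x
      + φ ((y - ySeq a k) / a ^ (k + 1)) * fSeq h l (k + 1) x := by
  classical
  have hex : ∃ j : ℕ, ySeq a j ≤ y ∧ y < ySeq a (j + 1) := ⟨k, hy1, hy2⟩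
  have hch : hex.choose = k := by
    obtain ⟨h1, h2⟩ := hex.choose_spec
    by_contra hne
    have hsm := ySeq_strictMono ha0
    rcases lt_or_gt_of_ne hne with hlt | hgt
    · have hle : hex.choose + 1 ≤ k := hlt
      exact absurd (le_trans (hsm.monotone hle) hy1) (not_le.mpr h2)
    · have hle : k + 1 ≤ hex.choose := hgt
      exact absurd (le_trans (hsm.monotone hle) h1) (not_le.mpr hy2)
  rw [psi, dif_pos hex, hch]

lemma key {a h l : ℝ} (ha0 : 0 < a) (ha1 : a < 1) (hh0 : 0 < h) (hh1 : h < 1)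
    (hl0 : 0 < l) (hl1 : l < 1) {N : ℕ} (hN0 : 0 < N) (hlN : l = 1 / N)
    {φ : ℝ → ℝ} (hφsmooth : ContDiff ℝ (⊤ : ℕ∞) φ)
    (hφ01 : ∀ t, φ t ∈ Set.Icc (0:ℝ) 1)
    (hφd0 : ∀ t, 0 ≤ deriv φ t) (hφd2 : ∀ t, deriv φ t ≤ 2)
    (hla : l < a) (hlh : l < h) {k : ℕ} (hk : 1 ≤ k) {y : ℝ}
    (hy : y ∈ Set.Ioo (ySeq a k) (ySeq a (k + 1))) :
    ∃ D : ℝ → ℝ,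
      (∀ x : ℝ, HasDerivAt (fun s => arc a h l φ x s) (D x) y) ∧
      π ≤ len a h l φ y ∧
      ∀ x ∈ Set.Icc (0:ℝ) π,
        |len a h l φ y * D x - arc a h l φ x y * D π|
          ≤ (4096 * (h / l) ^ 2 / a) * (l / a) ^ k * len a h l φ y ^ 2 := by
  obtain ⟨hy1, hy2⟩ := hy
  have hk0 : k ≠ 0 := by omega
  set ν : ℝ := (N : ℝ) with hνdef
  have hν0 : (0:ℝ) < ν := by rw [hνdef]; exact_mod_cast hN0
  have hlν : l * ν = 1 := by rw [hlN]; field_simp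
  have hν1 : 1 < ν := by nlinarith
  have hl' : l = 1 / ν := by rw [hlN]
  have hN1 : 1 < N := by rw [hνdef] at hν1; exact_mod_cast hν1
  set Y := ySeq a k with hY
  set A := a ^ (k+1) with hA
  have hA0 : 0 < A := pow_pos ha0 _
  set u : ℝ → ℝ := fun s => (s - Y) / A with hu
  set c : ℝ → ℝ := fun s => φ (u s) with hc
  set α : ℝ := h ^ k * ν ^ k with hα
  set β : ℝ := h ^ (k+1) * ν ^ (k+1) with hβ
  have hα0 : 0 < α := by positivity
  have hβ0 : 0 < β := by positivity
  have hhν1 : 1 ≤ h * ν := by nlinarith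
  have hα1 : 1 ≤ α := by
    have : α = (h * ν) ^ k := by rw [hα, mul_pow]
    rw [this]
    exact one_le_pow₀ hhν1
  have hαβ : β = α * (h * ν) := by rw [hα, hβ]; ring
  have hαβ' : α ≤ β := by nlinarith
  set q : ℝ → ℝ := fun t => β * Real.cos (ν^(k+1) * t) - α * Real.cos (ν^k * t) with hq
  set p : ℝ → ℝ → ℝ := fun cc t => α * Real.cos (ν^k * t) + cc * q t with hp
  have hqc : Continuous q := by rw [hq]; fun_prop
  have hpc : ∀ cc, Continuous (p cc) := by intro cc; rw [hp]; simp only [hq]; fun_prop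
  have hppos : ∀ cc t, (0:ℝ) < 1 + p cc t ^ 2 := fun cc t => by positivity
  set Fp : ℝ → ℝ → ℝ := fun cc t => Real.sqrt (1 + p cc t ^ 2) with hFp
  set Gp : ℝ → ℝ → ℝ := fun cc t => p cc t * q t / Real.sqrt (1 + p cc t ^ 2) with hGp
  have hFpc : ∀ cc, Continuous (Fp cc) := fun cc =>
    (continuous_const.add ((hpc cc).pow 2)).sqrt
  have hGpc : ∀ cc, Continuous (Gp cc) := fun cc =>
    ((hpc cc).mul hqc).div ((continuous_const.add ((hpc cc).pow 2)).sqrt)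
      (fun t => ne_of_gt (Real.sqrt_pos.mpr (hppos cc t)))
  -- argument rewriting
  have hlj : ∀ j : ℕ, l ^ j * ν ^ j = 1 := fun j => by rw [← mul_pow, hlν, one_pow]
  have hlj0 : ∀ j : ℕ, l ^ j ≠ 0 := fun j => pow_ne_zero _ (ne_of_gt hl0)
  have harg : ∀ (j : ℕ) (t : ℝ), t / l ^ j = ν ^ j * t := by
    intro j t
    rw [div_eq_iff (hlj0 j)]
    linear_combination (-t) * hlj j
  have hinvl : ∀ j : ℕ, 1 / l ^ j = ν ^ j := by
    intro j
    rw [div_eq_iff (hlj0 j)]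
    linear_combination (-1 : ℝ) * hlj j
  -- psi₁ formula
  have hpsi1 : ∀ s ∈ Set.Ioo Y (ySeq a (k+1)), ∀ t, psi₁ a h l φ t s = p (c s) t := by
    intro s hs t
    have hfun : (fun t => psi a h l φ t s) = fun t =>
        (1 - c s) * (h ^ k * Real.sin (t / l ^ k))
          + c s * (h ^ (k+1) * Real.sin (t / l ^ (k+1))) := by
      funext t
      rw [psi_eq ha0 φ hs.1.le hs.2 t]
      simp only [fSeq, if_neg hk0, if_neg (Nat.succ_ne_zero k)]
      rfl
    rw [psi₁, hfun]
    have d1 : HasDerivAt (fun t : ℝ => t / l ^ k) (1 / l ^ k) t := by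
      simpa using (hasDerivAt_id t).div_const (l ^ k)
    have d2 : HasDerivAt (fun t : ℝ => t / l ^ (k+1)) (1 / l ^ (k+1)) t := by
      simpa using (hasDerivAt_id t).div_const (l ^ (k+1))
    have h1 : HasDerivAt (fun t => (1 - c s) * (h ^ k * Real.sin (t / l ^ k))
        + c s * (h ^ (k+1) * Real.sin (t / l ^ (k+1))))
        ((1 - c s) * (h ^ k * (Real.cos (t / l ^ k) * (1 / l ^ k)))
          + c s * (h ^ (k+1) * (Real.cos (t / l ^ (k+1)) * (1 / l ^ (k+1))))) t :=
      ((d1.sin.const_mul (h^k)).const_mul _).add ((d2.sin.const_mul (h^(k+1))).const_mul _)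
    rw [h1.deriv, harg k t, harg (k+1) t, hinvl k, hinvl (k+1)]
    simp only [hp, hq, hα, hβ]
    ring
  -- arc formula
  have harc : ∀ s ∈ Set.Ioo Y (ySeq a (k+1)), ∀ x : ℝ,
      arc a h l φ x s = ∫ t in (0:ℝ)..x, Fp (c s) t := by
    intro s hs x
    rw [arc]
    apply intervalIntegral.integral_congr
    intro t _
    show Real.sqrt (1 + psi₁ a h l φ t s ^ 2) = Fp (c s) t
    rw [hpsi1 s hs t]
  -- bounds
  have habs_div : ∀ uu vv : ℝ, |uu * vv / Real.sqrt (1 + uu ^ 2)| ≤ |vv| := by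
    intro uu vv
    have hs0 : 0 < Real.sqrt (1 + uu ^ 2) := Real.sqrt_pos.mpr (by positivity)
    rw [abs_div, abs_mul, abs_of_pos hs0, div_le_iff₀ hs0]
    have h1 : |uu| ≤ Real.sqrt (1 + uu ^ 2) := by
      rw [← Real.sqrt_sq_eq_abs]; exact Real.sqrt_le_sqrt (by nlinarith)
    nlinarith [abs_nonneg uu, abs_nonneg vv]
  have hqb : ∀ t, |q t| ≤ α + β := by
    intro t
    simp only [hq]
    refine (abs_sub _ _).trans ?_
    rw [abs_mul, abs_of_pos hβ0, abs_mul, abs_of_pos hα0]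
    have h1 := Real.abs_cos_le_one (ν^(k+1) * t)
    have h2 := Real.abs_cos_le_one (ν^k * t)
    nlinarith
  have hGb : ∀ cc t, |Gp cc t| ≤ α + β := fun cc t => (habs_div _ _).trans (hqb t)
  -- derivative in the parameter
  have hFG : ∀ (x c₀ : ℝ), HasDerivAt (fun cc => ∫ t in (0:ℝ)..x, Fp cc t)
      (∫ t in (0:ℝ)..x, Gp c₀ t) c₀ := by
    intro x c₀
    have hmain := intervalIntegral.hasDerivAt_integral_of_dominated_loc_of_deriv_le
      (F := fun cc t => Fp cc t) (F' := fun cc t => Gp cc t) (x₀ := c₀)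
      (a := 0) (b := x) (bound := fun _ => α + β) (s := Metric.ball c₀ 1) (μ := MeasureSpace.volume) (Metric.ball_mem_nhds c₀ one_pos)
      (Eventually.of_forall fun cc => (hFpc cc).aestronglyMeasurable)
      ((hFpc c₀).intervalIntegrable 0 x)
      ((hGpc c₀).aestronglyMeasurable)
      (ae_of_all _ fun t _ cc _ => by rw [Real.norm_eq_abs]; exact hGb cc t)
      intervalIntegrable_const
      (ae_of_all _ fun t _ cc _ => ?_)
    · exact hmain.2
    · have hpd : HasDerivAt (fun cc => p cc t) (q t) cc := by
        have := ((hasDerivAt_id cc).mul_const (q t)).const_add (α * Real.cos (ν ^ k * t))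
        rw [one_mul] at this
        exact this
      have hin : HasDerivAt (fun cc => 1 + p cc t ^ 2) (2 * p cc t * q t) cc := by
        have h2 := (hpd.pow 2).const_add 1
        exact h2.congr_deriv (by norm_num)
      have hne : 1 + p cc t ^ 2 ≠ 0 := ne_of_gt (hppos cc t)
      have h3 := hin.sqrt hne
      refine h3.congr_deriv ?_
      show 2 * p cc t * q t / (2 * Real.sqrt (1 + p cc t ^ 2)) = p cc t * q t / Real.sqrt (1 + p cc t ^ 2)
      rw [show (2:ℝ) * p cc t * q t = 2 * (p cc t * q t) by ring,
        mul_div_mul_left _ _ (two_ne_zero)]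
  -- derivative of c
  have hφdiff : Differentiable ℝ φ := hφsmooth.differentiable (by simp)
  have hud : HasDerivAt u (1 / A) y := by
    simpa using ((hasDerivAt_id y).sub_const Y).div_const A
  have hcd : HasDerivAt c (deriv φ (u y) * (1 / A)) y :=
    ((hφdiff (u y)).hasDerivAt).comp y hud
  set c₀ := c y with hc₀
  set dφ : ℝ := deriv φ (u y) * (1 / A) with hdφ
  set D : ℝ → ℝ := fun x => (∫ t in (0:ℝ)..x, Gp c₀ t) * dφ with hD
  have hDer : ∀ x : ℝ, HasDerivAt (fun s => arc a h l φ x s) (D x) y := by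
    intro x
    have h1 : HasDerivAt (fun s => ∫ t in (0:ℝ)..x, Fp (c s) t) (D x) y := by
      have h2 := (hFG x c₀).comp y hcd
      exact h2
    apply h1.congr_of_eventuallyEq
    filter_upwards [isOpen_Ioo.mem_nhds (⟨hy1, hy2⟩ : y ∈ Set.Ioo Y (ySeq a (k+1)))] with s hs
    exact harc s hs x
  -- bounds at c₀
  have hc₀01 : c₀ ∈ Set.Icc (0:ℝ) 1 := hφ01 _
  have hpb : ∀ t, |p c₀ t| ≤ α + (α + β) := by
    intro t
    simp only [hp]
    refine (abs_add_le _ _).trans ?_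
    rw [abs_mul, abs_of_pos hα0, abs_mul]
    have h1 := Real.abs_cos_le_one (ν^k * t)
    have h2 := hqb t
    have h3 : |c₀| ≤ 1 := abs_le.mpr ⟨by linarith [hc₀01.1], hc₀01.2⟩
    nlinarith [abs_nonneg (q t), abs_nonneg c₀]
  have hFb : ∀ t, |Fp c₀ t| ≤ 1 + (α + (α + β)) := by
    intro t
    have h0 : 0 ≤ Fp c₀ t := Real.sqrt_nonneg _
    rw [abs_of_nonneg h0]
    have h1 : Fp c₀ t ≤ 1 + |p c₀ t| := by
      simp only [hFp]
      rw [show (1:ℝ) + |p c₀ t| = Real.sqrt ((1 + |p c₀ t|)^2) from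
        (Real.sqrt_sq (by positivity)).symm]
      apply Real.sqrt_le_sqrt
      nlinarith [abs_nonneg (p c₀ t), sq_abs (p c₀ t)]
    linarith [hpb t]
  -- periodicity
  set T : ℝ := 2 * π / ν ^ k with hT
  have hνk0 : (0:ℝ) < ν ^ k := pow_pos hν0 k
  have hνk1 : (1:ℝ) ≤ ν ^ k := one_le_pow₀ (le_of_lt hν1)
  have hT0 : 0 < T := by rw [hT]; positivity
  have hT2 : T ≤ 2 * π := by
    rw [hT, div_le_iff₀ hνk0]
    nlinarith [Real.pi_pos]
  have hperarg1 : ∀ t : ℝ, ν ^ k * (t + T) = ν ^ k * t + 2 * π := by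
    intro t
    rw [hT]
    field_simp
  have hperarg2 : ∀ t : ℝ, ν ^ (k+1) * (t + T) = ν ^ (k+1) * t + ν * (2 * π) := by
    intro t
    rw [hT, pow_succ]
    field_simp
  have hpper : Function.Periodic (p c₀) T := by
    intro t
    simp only [hp, hq]
    rw [hperarg1 t, hperarg2 t, Real.cos_add_two_pi, hνdef, Real.cos_add_nat_mul_two_pi]
  have hqper : Function.Periodic q T := by
    intro t
    simp only [hq]
    rw [hperarg1 t, hperarg2 t, Real.cos_add_two_pi, hνdef, Real.cos_add_nat_mul_two_pi]
  have hFper : Function.Periodic (Fp c₀) T := fun t => by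
    simp only [hFp]; rw [hpper t]
  have hGper : Function.Periodic (Gp c₀) T := fun t => by
    simp only [hGp]; rw [hpper t, hqper t]
  -- the length and its lower bound
  have hyIoo : y ∈ Set.Ioo Y (ySeq a (k+1)) := ⟨hy1, hy2⟩
  have hLeq : len a h l φ y = ∫ t in (0:ℝ)..π, Fp c₀ t := harc y hyIoo π
  have hLπ : π ≤ len a h l φ y := by
    rw [hLeq]
    exact pi_le_integral_sqrt (hpc c₀)
  set L : ℝ := len a h l φ y with hL
  have hcast : ∀ j : ℕ, ((N ^ j : ℕ) : ℝ) = ν ^ j := by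
    intro j; push_cast [hνdef]; ring
  have hmne : N ^ k ≠ N ^ (k+1) :=
    ne_of_lt (Nat.pow_lt_pow_right hN1 (by omega))
  have hm1 : 0 < N ^ k := pow_pos hN0 _
  have hm2 : 0 < N ^ (k+1) := pow_pos hN0 _
  have hb1 : π/2 * ((1 - c₀) * α) ≤ L := by
    rw [hLeq]
    have hlow := sqrt_one_add_sq_lower (A := (1-c₀)*α) (B := c₀*β)
      (by nlinarith [hc₀01.2]) (N^k) (N^(k+1)) hm1 hm2 hmne
    refine hlow.trans (le_of_eq ?_)
    apply intervalIntegral.integral_congr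
    intro t _
    simp only [hFp, hp, hq]
    rw [hcast k, hcast (k+1)]
    congr 1
    ring
  have hb2 : π/2 * (c₀ * β) ≤ L := by
    rw [hLeq]
    have hlow := sqrt_one_add_sq_lower (A := c₀*β) (B := (1-c₀)*α)
      (by nlinarith [hc₀01.1]) (N^(k+1)) (N^k) hm2 hm1 (Ne.symm hmne)
    refine hlow.trans (le_of_eq ?_)
    apply intervalIntegral.integral_congr
    intro t _
    simp only [hFp, hp, hq]
    rw [hcast k, hcast (k+1)]
    congr 1
    ring
  have hlow : π * α / 4 ≤ L := by
    have hXZ : α ≤ (1-c₀)*α + c₀*β := by nlinarith [hc₀01.1, hc₀01.2]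
    have hπ2 : (0:ℝ) < π/2 := by positivity
    nlinarith [hb1, hb2, mul_le_mul_of_nonneg_left hXZ (le_of_lt hπ2)]
  -- assembling
  refine ⟨D, hDer, hLπ, ?_⟩
  intro x hx
  have harcx : arc a h l φ x y = ∫ t in (0:ℝ)..x, Fp c₀ t := harc y hyIoo x
  have hdet := det_bound hT0 hT2 hFper hGper (hFpc c₀) (hGpc c₀) hFb (hGb c₀) hx.1 hx.2
  have hexp : L * D x - arc a h l φ x y * D π
      = ((∫ t in (0:ℝ)..π, Fp c₀ t) * (∫ t in (0:ℝ)..x, Gp c₀ t)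
        - (∫ t in (0:ℝ)..x, Fp c₀ t) * (∫ t in (0:ℝ)..π, Gp c₀ t)) * dφ := by
    rw [hLeq, harcx]
    simp only [hD]
    ring
  rw [hexp, abs_mul]
  have hdφb : |dφ| ≤ 2 / A := by
    rw [hdφ, abs_mul, abs_of_nonneg (hφd0 _), abs_of_pos (by positivity : (0:ℝ) < 1/A)]
    calc deriv φ (u y) * (1/A) ≤ 2 * (1/A) :=
        mul_le_mul_of_nonneg_right (hφd2 _) (by positivity)
      _ = 2 / A := by ring
  have hMFb : 1 + (α + (α + β)) ≤ 4 * β := by nlinarith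
  have hMGb : α + β ≤ 2 * β := by nlinarith
  calc |(∫ t in (0:ℝ)..π, Fp c₀ t) * (∫ t in (0:ℝ)..x, Gp c₀ t)
        - (∫ t in (0:ℝ)..x, Fp c₀ t) * (∫ t in (0:ℝ)..π, Gp c₀ t)| * |dφ|
      ≤ (8 * π * T * (1 + (α + (α + β))) * (α + β)) * (2 / A) :=
        mul_le_mul hdet hdφb (abs_nonneg _) (by positivity)
    _ ≤ (8 * π * T * (4 * β) * (2 * β)) * (2 / A) := by
        have hπ0 := Real.pi_pos
        gcongr
    _ = 256 * π^2 * β^2 / (A * ν^k) := by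
        rw [hT]
        field_simp
        ring
    _ = (4096 * (h/l)^2 / a) * (l/a)^k * (π * α / 4)^2 := by
        have hhl : h / l = h * ν := by
          rw [hl']
          field_simp
        have hla2 : (l/a)^k = 1 / (ν^k * a^k) := by
          rw [hl', div_div, div_pow, one_pow, mul_pow]
        rw [hhl, hla2, hA, hα, hβ]
        field_simp
        ring
    _ ≤ (4096 * (h/l)^2 / a) * (l/a)^k * L^2 := by
        have h3 : (π * α / 4)^2 ≤ L^2 := by
          apply pow_le_pow_left₀ (by positivity) ?_ 2
          linarith [hlow]
        have hC : (0:ℝ) ≤ (4096*(h/l)^2/a) * (l/a)^k := by positivity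
        exact mul_le_mul_of_nonneg_left h3 hC

lemma len_eq_arc (a h l : ℝ) (φ : ℝ → ℝ) : len a h l φ = fun s => arc a h l φ π s := rfl

/-- Assume `λ < a` and `λ < h`. On each open strip `(y_k, y_{k+1})` the functions
`y ↦ L(x,y)` and `y ↦ L(y)` are differentiable, the cancellation estimate
`|L(y) ∂_y L(x,y) - L(x,y) ∂_y L(y)| ≤ C (λ/a)^k L(y)²` holds with a constant `C`
independent of `k`, `x`, `y`, and consequently
`sup_x |L(y) ∂_y L(x,y) - L(x,y) ∂_y L(y)|/L(y)² → 0` as `y → y_∞`. -/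
theorem len_cancellation_estimate (a h l : ℝ) (ha0 : 0 < a) (ha1 : a < 1) (hh0 : 0 < h) (hh1 : h < 1)
    (hl0 : 0 < l) (hl1 : l < 1) (hlN : ∃ N : ℕ, 0 < N ∧ l = 1 / N)
    (φ : ℝ → ℝ) (hφsmooth : ContDiff ℝ (⊤ : ℕ∞) φ) (hφmono : Monotone φ)
    (hφ01 : ∀ t, φ t ∈ Set.Icc (0:ℝ) 1)
    (hφd0 : ∀ t, 0 ≤ deriv φ t) (hφd2 : ∀ t, deriv φ t ≤ 2)
    (hφ0 : ∃ ε > 0, ∀ t < ε, φ t = 0) (hφ1 : ∃ ε > 0, ∀ t > 1 - ε, φ t = 1)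
    (hla : l < a) (hlh : l < h) :
    (∀ k : ℕ, 1 ≤ k → ∀ x ∈ Icc (0:ℝ) π, ∀ y ∈ Ioo (ySeq a k) (ySeq a (k + 1)),
      DifferentiableAt ℝ (fun s => arc a h l φ x s) y ∧
      DifferentiableAt ℝ (len a h l φ) y) ∧
    (∃ C : ℝ, 0 < C ∧ ∀ k : ℕ, 1 ≤ k → ∀ x ∈ Icc (0:ℝ) π,
      ∀ y ∈ Ioo (ySeq a k) (ySeq a (k + 1)),
      |len a h l φ y * deriv (fun s => arc a h l φ x s) y
          - arc a h l φ x y * deriv (len a h l φ) y|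
        ≤ C * (l / a) ^ k * len a h l φ y ^ 2) ∧
    (∀ ε : ℝ, 0 < ε → ∃ y' : ℝ, y' < yInf a ∧ ∀ k : ℕ, 1 ≤ k →
      ∀ y ∈ Ioo (ySeq a k) (ySeq a (k + 1)), y' < y → ∀ x ∈ Icc (0:ℝ) π,
      |len a h l φ y * deriv (fun s => arc a h l φ x s) y
          - arc a h l φ x y * deriv (len a h l φ) y| / len a h l φ y ^ 2 < ε) := by

  obtain ⟨N, hN0, hlN⟩ := hlN
  have hkey : ∀ (k : ℕ), 1 ≤ k → ∀ (y : ℝ), y ∈ Ioo (ySeq a k) (ySeq a (k + 1)) →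
      ∃ D : ℝ → ℝ,
        (∀ x : ℝ, HasDerivAt (fun s => arc a h l φ x s) (D x) y) ∧
        π ≤ len a h l φ y ∧
        ∀ x ∈ Set.Icc (0:ℝ) π,
          |len a h l φ y * D x - arc a h l φ x y * D π|
            ≤ (4096 * (h / l) ^ 2 / a) * (l / a) ^ k * len a h l φ y ^ 2 :=
    fun k hk y hy => key ha0 ha1 hh0 hh1 hl0 hl1 hN0 hlN hφsmooth hφ01 hφd0 hφd2 hla hlh hk hy
  have hr0 : (0:ℝ) < l / a := by positivity
  have hr1 : l / a < 1 := by rw [div_lt_one ha0]; exact hla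
  refine ⟨?_, ?_, ?_⟩
  · intro k hk x hx y hy
    obtain ⟨D, hD, -, -⟩ := hkey k hk y hy
    refine ⟨(hD x).differentiableAt, ?_⟩
    rw [len_eq_arc]
    exact (hD π).differentiableAt
  · refine ⟨4096 * (h / l) ^ 2 / a, by positivity, ?_⟩
    intro k hk x hx y hy
    obtain ⟨D, hD, hLπ, hbound⟩ := hkey k hk y hy
    have e2 : deriv (len a h l φ) y = D π := by
      rw [len_eq_arc]; exact (hD π).deriv
    rw [(hD x).deriv, e2]
    exact hbound x hx
  · intro ε hε
    obtain ⟨K, hK⟩ : ∃ K : ℕ, (4096 * (h / l) ^ 2 / a) * (l / a) ^ K < ε := by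
      have h1 := tendsto_pow_atTop_nhds_zero_of_lt_one (le_of_lt hr0) hr1
      have h2 : Tendsto (fun K : ℕ => (4096 * (h / l) ^ 2 / a) * (l / a) ^ K) atTop (nhds 0) := by
        simpa using h1.const_mul (4096 * (h / l) ^ 2 / a)
      exact (h2.eventually (gt_mem_nhds hε)).exists
    refine ⟨ySeq a K, ySeq_lt_yInf ha0 ha1 K, ?_⟩
    intro k hk y hy hy' x hx
    obtain ⟨D, hD, hLπ, hbound⟩ := hkey k hk y hy
    have hL0 : 0 < len a h l φ y := lt_of_lt_of_le Real.pi_pos hLπ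
    have hL2 : 0 < len a h l φ y ^ 2 := by positivity
    have e2 : deriv (len a h l φ) y = D π := by
      rw [len_eq_arc]; exact (hD π).deriv
    rw [(hD x).deriv, e2, div_lt_iff₀ hL2]
    have hKk : K ≤ k := by
      have := (ySeq_strictMono ha0).lt_iff_lt.mp (lt_trans hy' hy.2)
      omega
    have hmono : (l / a) ^ k ≤ (l / a) ^ K :=
      pow_le_pow_of_le_one (le_of_lt hr0) (le_of_lt hr1) hKk
    calc |len a h l φ y * D x - arc a h l φ x y * D π|
        ≤ (4096 * (h / l) ^ 2 / a) * (l / a) ^ k * len a h l φ y ^ 2 := hbound x hx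
      _ ≤ (4096 * (h / l) ^ 2 / a) * (l / a) ^ K * len a h l φ y ^ 2 := by
          have hC0 : (0:ℝ) ≤ 4096 * (h / l) ^ 2 / a := by positivity
          exact mul_le_mul_of_nonneg_right
            (mul_le_mul_of_nonneg_left hmono hC0) hL2.le
      _ < ε * len a h l φ y ^ 2 := mul_lt_mul_of_pos_right hK hL2


end StokesCounterexample
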